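/- arXiv:1410.1333 — 2 statements merged into one kernel-verified Lean document; each statement's English description precedes it below -/
import Mathlib

section
/- Let q be a prime power and k, m positive integers. For every F_q-linear subspace C ⊆ Mat(k×m, F_q), dim_{F_q}(C) ≤ max{k,m} · maxrk(C). Moreover, for every integer 0 ≤ D ≤ min{k,m} there exists an F_q-linear subspace C ⊆ Mat(k×m, F_q) with maxrk(C) = D and dim_{F_q}(C) = max{k,m} · D. -/
open Matrix BigOperators

/-- The Gaussian (q-)binomial coefficient, defined via the q-Pascal recursion. -/
def qBinom (q : ℕ) : ℕ → ℕ → ℕ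
  | _, 0 => 1
  | 0, _ + 1 => 0
  | s + 1, t + 1 => qBinom q s t + q ^ (t + 1) * qBinom q s (t + 1)

variable {F : Type} [Field F]

/-- The dual of a rank-metric code with respect to the trace product. -/
def dualCode {k m : ℕ} (C : Submodule F (Matrix (Fin k) (Fin m) F)) :
    Submodule F (Matrix (Fin k) (Fin m) F) where
  carrier := {N | ∀ M ∈ C, Matrix.trace (M * Nᵀ) = 0}
  add_mem' := by
    intro a b ha hb M hM
    rw [Set.mem_setOf_eq] at *
    rw [Matrix.transpose_add, Matrix.mul_add, Matrix.trace_add, ha M hM, hb M hM, add_zero]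
  zero_mem' := by
    intro M hM
    simp
  smul_mem' := by
    intro c N hN M hM
    rw [Set.mem_setOf_eq] at *
    rw [Matrix.transpose_smul, Matrix.mul_smul, Matrix.trace_smul, hN M hM, smul_zero]

/-- Minimum rank of a code. -/
noncomputable def minrk {k m : ℕ} (C : Submodule F (Matrix (Fin k) (Fin m) F)) : ℕ :=
  sInf {r | ∃ M ∈ C, M ≠ 0 ∧ M.rank = r}

/-- Maximum rank of a code. -/
noncomputable def maxrk {k m : ℕ} (C : Submodule F (Matrix (Fin k) (Fin m) F)) : ℕ :=
  sSup {r | ∃ M ∈ C, M.rank = r}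

/-- Rank distribution of a code. -/
noncomputable def rankDist {k m : ℕ} (C : Submodule F (Matrix (Fin k) (Fin m) F)) (i : ℕ) : ℕ :=
  Nat.card {M : Matrix (Fin k) (Fin m) F // M ∈ C ∧ M.rank = i}

/-- MRD codes. -/
def IsMRD {k m : ℕ} (C : Submodule F (Matrix (Fin k) (Fin m) F)) : Prop :=
  C = ⊥ ∨ Module.finrank F ↥C = max k m * (min k m - minrk C + 1)

/-- Optimal anticodes. -/
def IsOptimalAnticode {k m : ℕ} (C : Submodule F (Matrix (Fin k) (Fin m) F)) : Prop :=
  Module.finrank F ↥C = max k m * maxrk C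

/-- The subspace of matrices whose column space is contained in `U`. -/
def matIn {k : ℕ} (m : ℕ) (U : Submodule F (Fin k → F)) :
    Submodule F (Matrix (Fin k) (Fin m) F) where
  carrier := {M | ∀ j, Mᵀ j ∈ U}
  add_mem' := by
    intro a b ha hb j
    rw [Matrix.transpose_add]
    exact U.add_mem (ha j) (hb j)
  zero_mem' := by
    intro j
    rw [Matrix.transpose_zero]
    exact U.zero_mem
  smul_mem' := by
    intro c M hM j
    rw [Matrix.transpose_smul]
    exact U.smul_mem c (hM j)

/-- The dual of a subspace of `Fin k → K` with respect to the standard inner product. -/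
def dualPi {K : Type} [Field K] {k : ℕ} (C : Submodule K (Fin k → K)) :
    Submodule K (Fin k → K) where
  carrier := {β | ∀ α ∈ C, ∑ i, α i * β i = 0}
  add_mem' := by
    intro a b ha hb α hα
    rw [Set.mem_setOf_eq] at *
    have : ∑ i, α i * (a + b) i = (∑ i, α i * a i) + ∑ i, α i * b i := by
      rw [← Finset.sum_add_distrib]
      exact Finset.sum_congr rfl fun i _ => by simp [mul_add]
    rw [this, ha α hα, hb α hα, add_zero]
  zero_mem' := by
    intro α hα
    simp
  smul_mem' := by
    intro c β hβ α hα
    rw [Set.mem_setOf_eq] at *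
    have : ∑ i, α i * (c • β) i = c * ∑ i, α i * β i := by
      rw [Finset.mul_sum]
      exact Finset.sum_congr rfl fun i _ => by simp [smul_eq_mul]; ring
    rw [this, hβ α hα, mul_zero]

/-- The matrix associated to a vector `α ∈ K^k` with respect to a basis `G` of `K` over `F`. -/
noncomputable def matOfBasis (F K : Type) [Field F] [Field K] [Algebra F K]
    (k m : ℕ) (G : Module.Basis (Fin m) F K) :
    (Fin k → K) →ₗ[F] Matrix (Fin k) (Fin m) F where
  toFun α := Matrix.of fun i j => G.repr (α i) j
  map_add' α β := by
    ext i j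
    simp
  map_smul' c α := by
    ext i j
    simp

/-- The `h`-trace of a `k × m` matrix (`k ≤ m`). -/
def hTrace {k m : ℕ} (hkm : k ≤ m) (h : ℕ) (M : Matrix (Fin k) (Fin m) F) : F :=
  ∑ i : Fin k, if (i : ℕ) < h then M i (Fin.castLE hkm i) else 0


section proof10
open Polynomial Module Submodule


lemma X_pow_dvd_aux (R : Type) [CommRing R] (q Q : ℕ) (hq : 0 < q) (hQ : 0 < Q) (hd : q - 1 ∣ Q - 1) :
    (X ^ q - X : R[X]) ∣ X ^ Q - X := by
  obtain ⟨s, hs⟩ := hd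
  have h1 : (X ^ q - X : R[X]) = X * (X ^ (q - 1) - 1) := by
    rw [mul_sub, mul_one, ← pow_succ']
    congr 2
    omega
  have h2 : (X ^ Q - X : R[X]) = X * (X ^ (Q - 1) - 1) := by
    rw [mul_sub, mul_one, ← pow_succ']
    congr 2
    omega
  rw [h1, h2]
  refine mul_dvd_mul_left _ ?_
  have := sub_dvd_pow_sub_pow ((X : R[X]) ^ (q - 1)) 1 s
  rwa [one_pow, ← pow_mul, ← hs] at this

lemma exists_finite_ext (F : Type) [Field F] [Fintype F] (m : ℕ) (hm : 0 < m) :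
    ∃ (K : Type) (_ : Field K) (_ : Fintype K) (_ : Algebra F K),
      Module.finrank F K = m := by
  obtain ⟨p, hc⟩ := CharP.exists F
  haveI : Fact p.Prime := ⟨CharP.char_is_prime F p⟩
  obtain ⟨n, hp, hcard⟩ := FiniteField.card F p
  letI : Algebra (ZMod p) F := ZMod.algebra F p
  set L := GaloisField p (n * m) with hL
  haveI : Fintype L := Fintype.ofFinite L
  have hsplitsBig : Splits ((X ^ p ^ (n * m) - X : (ZMod p)[X]).map (algebraMap (ZMod p) L)) :=
    SplittingField.splits (X ^ p ^ (n * m) - X : (ZMod p)[X])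
  have hdvd : (X ^ p ^ (n : ℕ) - X : (ZMod p)[X]) ∣ X ^ p ^ (n * m) - X := by
    apply X_pow_dvd_aux _ _ _ (pow_pos hp.pos _) (pow_pos hp.pos _)
    have := Nat.sub_dvd_pow_sub_pow (p ^ (n : ℕ)) 1 m
    rwa [one_pow, ← pow_mul] at this
  have hsplits : Splits ((X ^ p ^ (n : ℕ) - X : (ZMod p)[X]).map (algebraMap (ZMod p) L)) :=
    Polynomial.Splits.of_dvd hsplitsBig
      (Polynomial.map_ne_zero (FiniteField.X_pow_card_pow_sub_X_ne_zero _ (by positivity : (n:ℕ) * m ≠ 0) hp.one_lt))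
      (Polynomial.map_dvd _ hdvd)
  haveI : IsSplittingField (ZMod p) F (X ^ p ^ (n : ℕ) - X) :=
    FiniteField.isSplittingField_of_card_eq _ _ hcard
  let ψ : F →ₐ[ZMod p] L := IsSplittingField.lift F (X ^ p ^ (n : ℕ) - X) hsplits
  letI : Algebra F L := ψ.toRingHom.toAlgebra
  haveI : IsScalarTower (ZMod p) F L :=
    IsScalarTower.of_algebraMap_eq fun x => (ψ.commutes x).symm
  have h1 : finrank (ZMod p) F * finrank F L = finrank (ZMod p) L :=
    finrank_mul_finrank _ _ _
  have h2 : finrank (ZMod p) L = n * m := GaloisField.finrank p (by positivity)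
  have h3 : finrank (ZMod p) F = n := by
    have := card_eq_pow_finrank (K := ZMod p) (V := F)
    rw [ZMod.card, hcard] at this
    exact (Nat.pow_right_injective hp.two_le this.symm)
  rw [h2, h3] at h1
  exact ⟨L, inferInstance, inferInstance, inferInstance,
    Nat.eq_of_mul_eq_mul_left n.pos h1⟩

lemma rankset_bdd {k m : ℕ} (C : Submodule F (Matrix (Fin k) (Fin m) F)) :
    BddAbove {r | ∃ M ∈ C, M.rank = r} :=
  ⟨k, fun _ ⟨N, _, h⟩ => h ▸ N.rank_le_height⟩

lemma rank_le_maxrk {k m : ℕ} {C : Submodule F (Matrix (Fin k) (Fin m) F)}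
    {M : Matrix (Fin k) (Fin m) F} (hM : M ∈ C) : M.rank ≤ maxrk C :=
  le_csSup (rankset_bdd C) ⟨M, hM, rfl⟩

lemma maxrk_eq_of {k m : ℕ} {C : Submodule F (Matrix (Fin k) (Fin m) F)} {D : ℕ}
    (hub : ∀ M ∈ C, M.rank ≤ D) (hmem : ∃ M ∈ C, M.rank = D) : maxrk C = D := by
  obtain ⟨M, hM, hMr⟩ := hmem
  refine le_antisymm (csSup_le ⟨0, 0, C.zero_mem, Matrix.rank_zero⟩ ?_)
    (le_csSup (rankset_bdd C) ⟨M, hM, hMr⟩)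
  rintro r ⟨N, hN, rfl⟩
  exact hub N hN

lemma rank_matOfBasis (F K : Type) [Field F] [Field K] [Algebra F K]
    (k m : ℕ) (G : Basis (Fin m) F K) (α : Fin k → K) :
    (matOfBasis F K k m G α).rank
      = finrank F (Submodule.span F (Set.range α)) := by
  classical
  set e : K ≃ₗ[F] (Fin m → F) :=
    G.repr.trans (Finsupp.linearEquivFunOnFinite F F (Fin m)) with he
  have h1 : (matOfBasis F K k m G α) = (matOfBasis F K k m G α)ᵀᵀ := by
    rw [transpose_transpose]
  rw [← Matrix.rank_transpose, Matrix.rank_eq_finrank_span_cols, Matrix.col]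
  have h2 : Set.range (matOfBasis F K k m G α)ᵀᵀ = e '' Set.range α := by
    rw [transpose_transpose, ← Set.range_comp]
    rfl
  rw [h2, ← LinearEquiv.coe_coe, ← Submodule.map_span]
  exact LinearEquiv.finrank_map_eq e _
section qpoly
variable (F K : Type) [Field F] [Fintype F] [Field K] [Algebra F K]

lemma alg_pow_card_pow (a : F) (j : ℕ) :
    (algebraMap F K a) ^ (Fintype.card F) ^ j = algebraMap F K a := by
  rw [← map_pow, FiniteField.pow_card_pow]

lemma add_pow_card_pow (x y : K) (j : ℕ) :
    (x + y) ^ (Fintype.card F) ^ j = x ^ (Fintype.card F) ^ j + y ^ (Fintype.card F) ^ j := by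
  obtain ⟨p, hc⟩ := CharP.exists F
  haveI : Fact p.Prime := ⟨CharP.char_is_prime F p⟩
  haveI : CharP K p := charP_of_injective_algebraMap (algebraMap F K).injective p
  obtain ⟨n, hp, hcard⟩ := FiniteField.card F p
  rw [hcard]
  simp only [← pow_mul]
  exact add_pow_char_pow x y p (↑n * j)

noncomputable def qPolyMap (t : ℕ) (c : Fin t → K) : K →ₗ[F] K where
  toFun x := ∑ j : Fin t, c j * x ^ (Fintype.card F) ^ (j : ℕ)
  map_add' x y := by
    rw [← Finset.sum_add_distrib]
    refine Finset.sum_congr rfl fun j _ => ?_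
    rw [add_pow_card_pow F K, mul_add]
  map_smul' a x := by
    simp only [RingHom.id_apply, Algebra.smul_def, Finset.mul_sum]
    refine Finset.sum_congr rfl fun j _ => ?_
    rw [mul_pow, alg_pow_card_pow F K]
    ring

lemma finrank_ker_qPolyMap [Fintype K] {t : ℕ} {c : Fin t → K} (hc : c ≠ 0) :
    finrank F (LinearMap.ker (qPolyMap F K t c)) ≤ t - 1 := by
  classical
  set q := Fintype.card F with hq
  set P : K[X] := ∑ j : Fin t, Polynomial.C (c j) * X ^ (q ^ (j : ℕ)) with hP
  obtain ⟨j0, hj0⟩ : ∃ j, c j ≠ 0 := by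
    by_contra h
    push_neg at h
    exact hc (funext h)
  have hq1 : 1 < q := Fintype.one_lt_card
  have hPne : P ≠ 0 := by
    intro h
    have : P.coeff (q ^ (j0 : ℕ)) = c j0 := by
      rw [hP, Polynomial.finset_sum_coeff]
      rw [Finset.sum_eq_single j0]
      · simp
      · intro j _ hj
        rw [Polynomial.coeff_C_mul, Polynomial.coeff_X_pow, if_neg, mul_zero]
        intro hEq
        exact hj (Fin.ext (Nat.pow_right_injective hq1 hEq.symm))
      · simp
    rw [h] at this
    exact hj0 (by simpa using this.symm)
  have hdeg : P.natDegree ≤ q ^ (t - 1) := by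
    refine Polynomial.natDegree_sum_le_of_forall_le _ _ fun j _ => ?_
    refine (Polynomial.natDegree_C_mul_X_pow_le _ _).trans ?_
    exact Nat.pow_le_pow_right (by omega) (by omega)
  -- kernel is contained in root set
  haveI : Fintype (LinearMap.ker (qPolyMap F K t c)) := Fintype.ofFinite _
  have hcardker : Fintype.card (LinearMap.ker (qPolyMap F K t c))
      = q ^ finrank F (LinearMap.ker (qPolyMap F K t c)) := card_eq_pow_finrank
  have hinj : Fintype.card (LinearMap.ker (qPolyMap F K t c)) ≤ P.roots.toFinset.card := by
    rw [← Fintype.card_coe]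
    refine Fintype.card_le_of_injective
      (fun x => ⟨x.1, ?_⟩) (fun x y hxy => by
        apply Subtype.ext
        simpa using hxy)
    have hx : Polynomial.eval x.1 P = 0 := by
      have h1 : Polynomial.eval x.1 P = qPolyMap F K t c x.1 := by
        rw [hP, Polynomial.eval_finset_sum]
        simp only [Polynomial.eval_mul, Polynomial.eval_C, Polynomial.eval_pow,
          Polynomial.eval_X]
        rfl
      rw [h1, LinearMap.mem_ker.mp x.2]
    rw [Multiset.mem_toFinset, Polynomial.mem_roots hPne]
    exact hx
  have hroots : P.roots.toFinset.card ≤ q ^ (t - 1) :=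
    le_trans (le_trans (Multiset.toFinset_card_le _) (Polynomial.card_roots' P)) hdeg
  have := hcardker ▸ le_trans hinj hroots
  exact (Nat.pow_le_pow_iff_right hq1).mp (by omega)


end qpoly

section delsarte
variable (F K : Type) [Field F] [Fintype F] [Field K] [Fintype K] [Algebra F K]

lemma rank_codeword_ge {k m t : ℕ} (hkm : k ≤ m) (G : Basis (Fin m) F K)
    {c : Fin t → K} (hc : c ≠ 0) :
    k - (t - 1) ≤ (matOfBasis F K k m G
      fun i => qPolyMap F K t c (G (Fin.castLE hkm i))).rank := by
  rw [rank_matOfBasis]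
  set φ := qPolyMap F K t c with hφ
  set g : Fin k → K := fun i => G (Fin.castLE hkm i) with hg
  have hr : Set.range (fun i => φ (g i)) = φ '' Set.range g := by
    rw [← Set.range_comp]; rfl
  rw [hr, ← Submodule.map_span]
  set W := Submodule.span F (Set.range g) with hWdef
  haveI : FiniteDimensional F K := Module.Finite.of_finite
  have hW : finrank F W = k := by
    have : (Set.range fun i => G (Fin.castLE hkm i))
        = Set.range (⇑G ∘ Fin.castLE hkm) := rfl
    rw [hWdef, hg, this, finrank_span_eq_card
      (G.linearIndependent.comp _ (Fin.castLE_injective hkm))]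
    simp
  have h2 : Submodule.map φ W = LinearMap.range (φ.domRestrict W) :=
    (LinearMap.range_domRestrict W φ).symm
  rw [h2]
  have h3 := LinearMap.finrank_range_add_finrank_ker (φ.domRestrict W)
  rw [hW] at h3
  have h4 : finrank F (LinearMap.ker (φ.domRestrict W)) ≤ t - 1 := by
    refine le_trans (LinearMap.finrank_le_finrank_of_injective
      (f := ?_) ?_) (finrank_ker_qPolyMap F K hc)
    · exact
      { toFun := fun x => ⟨x.1.1, by
          have hx := x.2
          rw [LinearMap.mem_ker] at hx ⊢
          exact hx⟩
        map_add' := fun a b => rfl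
        map_smul' := fun r a => rfl }
    · intro a b h
      apply Subtype.ext
      apply Subtype.ext
      simpa using h
  omega
end delsarte

section bound
variable (F : Type) [Field F] [Fintype F]

lemma anticode_bound_le {k m : ℕ} (hkm : k ≤ m) (hm : 0 < m)
    (C : Submodule F (Matrix (Fin k) (Fin m) F)) :
    finrank F C ≤ m * maxrk C := by
  classical
  set r := maxrk C with hr
  have hrle : ∀ M ∈ C, M.rank ≤ r := fun M hM => le_csSup (rankset_bdd C) ⟨M, hM, rfl⟩
  have hCle : finrank F C ≤ k * m := by
    have := Submodule.finrank_le C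
    rwa [Module.finrank_matrix, Module.finrank_self, mul_one, Fintype.card_fin, Fintype.card_fin] at this
  by_cases hrk : k ≤ r
  · exact hCle.trans (by nlinarith)
  push_neg at hrk
  obtain ⟨K, _, _, _, hK⟩ := exists_finite_ext F m hm
  haveI : FiniteDimensional F K := Module.Finite.of_finite
  set t := k - r with ht
  let G : Basis (Fin m) F K := Module.finBasisOfFinrankEq F K hK
  let ev : (Fin t → K) →ₗ[F] (Fin k → K) :=
    { toFun := fun c => fun i => qPolyMap F K t c (G (Fin.castLE hkm i))
      map_add' := by
        intro c d
        funext i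
        show ∑ j : Fin t, (c + d) j * G (Fin.castLE hkm i) ^ Fintype.card F ^ (j : ℕ)
          = (∑ j : Fin t, c j * G (Fin.castLE hkm i) ^ Fintype.card F ^ (j : ℕ))
            + ∑ j : Fin t, d j * G (Fin.castLE hkm i) ^ Fintype.card F ^ (j : ℕ)
        rw [← Finset.sum_add_distrib]
        exact Finset.sum_congr rfl fun j _ => by simp [add_mul]
      map_smul' := by
        intro a c
        funext i
        show ∑ j : Fin t, (a • c) j * G (Fin.castLE hkm i) ^ Fintype.card F ^ (j : ℕ)
          = a • ∑ j : Fin t, c j * G (Fin.castLE hkm i) ^ Fintype.card F ^ (j : ℕ)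
        rw [Finset.smul_sum]
        exact Finset.sum_congr rfl fun j _ => by
          rw [Pi.smul_apply, smul_mul_assoc] }
  let E : (Fin t → K) →ₗ[F] Matrix (Fin k) (Fin m) F := (matOfBasis F K k m G).comp ev
  have hrank : ∀ c : Fin t → K, c ≠ 0 → r + 1 ≤ (E c).rank := by
    intro c hc
    have := rank_codeword_ge F K hkm G hc
    have hEc : E c = matOfBasis F K k m G
        (fun i => qPolyMap F K t c (G (Fin.castLE hkm i))) := rfl
    rw [hEc]
    omega
  have hinj : Function.Injective E := by
    rw [← LinearMap.ker_eq_bot, Submodule.eq_bot_iff]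
    intro c hc
    by_contra hne
    have h1 := hrank c hne
    rw [LinearMap.mem_ker.mp hc, Matrix.rank_zero] at h1
    omega
  have hdim : finrank F (LinearMap.range E) = t * m := by
    rw [LinearMap.finrank_range_of_inj hinj, Module.finrank_pi_fintype]
    simp [hK, Finset.sum_const]
  have hdisj : C ⊓ LinearMap.range E = ⊥ := by
    rw [Submodule.eq_bot_iff]
    rintro M ⟨hMC, c, rfl⟩
    by_contra hne
    have hc : c ≠ 0 := by rintro rfl; simp at hne
    have := hrank c hc
    have := hrle _ hMC
    omega
  have hsum := Submodule.finrank_sup_add_finrank_inf_eq C (LinearMap.range E)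
  rw [hdisj, hdim, finrank_bot] at hsum
  have hle2 : finrank F ↥(C ⊔ LinearMap.range E) ≤ k * m := by
    have := Submodule.finrank_le (C ⊔ LinearMap.range E)
    rwa [Module.finrank_matrix, Module.finrank_self, mul_one, Fintype.card_fin, Fintype.card_fin] at this
  have hmul : t * m + r * m = k * m := by rw [← add_mul]; congr 1; omega
  nlinarith
end bound

noncomputable def matInEquiv {k m : ℕ} (U : Submodule F (Fin k → F)) :
    (matIn m U) ≃ₗ[F] (Fin m → U) where
  toFun M := fun j => ⟨(M : Matrix (Fin k) (Fin m) F)ᵀ j, M.2 j⟩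
  map_add' M N := by funext j; ext i; rfl
  map_smul' c M := by funext j; ext i; rfl
  invFun v := ⟨Matrix.of fun i j => (v j : Fin k → F) i, fun j => by
    convert (v j).2 using 1; rfl⟩
  left_inv M := by ext i j; rfl
  right_inv v := by funext j; ext i; rfl

lemma anticode_exists {k m : ℕ} (hkm : k ≤ m) (D : ℕ) (hD : D ≤ k) :
    ∃ C : Submodule F (Matrix (Fin k) (Fin m) F),
      maxrk C = D ∧ finrank F C = m * D := by
  classical
  set u : Fin D → (Fin k → F) := fun i => Pi.single (Fin.castLE hD i) (1 : F) with hu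
  have hulin : LinearIndependent F u := by
    have : u = (Pi.basisFun F (Fin k)) ∘ (Fin.castLE hD) := by
      funext i; rw [hu, Function.comp_apply, Pi.basisFun_apply]
    rw [this]
    exact (Pi.basisFun F (Fin k)).linearIndependent.comp _ (Fin.castLE_injective hD)
  set U := Submodule.span F (Set.range u) with hU
  have hUdim : finrank F U = D := by
    rw [hU, finrank_span_eq_card hulin, Fintype.card_fin]
  refine ⟨matIn m U, ?_, ?_⟩
  · -- maxrk = D
    -- the witness matrix
    set M : Matrix (Fin k) (Fin m) F :=
      Matrix.of (fun i j => if (i : ℕ) = (j : ℕ) ∧ (j : ℕ) < D then 1 else 0) with hM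
    have hcols : ∀ j : Fin m, Mᵀ j ∈ U := by
      intro j
      by_cases hj : (j : ℕ) < D
      · have : Mᵀ j = u ⟨(j : ℕ), hj⟩ := by
          funext i
          rw [hu]
          simp only [Matrix.transpose_apply, hM, Matrix.of_apply]
          rw [Pi.single_apply]
          by_cases h : (i : ℕ) = (j : ℕ)
          · rw [if_pos ⟨h, hj⟩, if_pos]
            exact Fin.ext (by simpa using h)
          · rw [if_neg (fun hc => h hc.1), if_neg]
            intro hc
            exact h (by simpa using congrArg Fin.val hc)
        rw [this]
        exact Submodule.subset_span ⟨_, rfl⟩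
      · have : Mᵀ j = 0 := by
          funext i
          simp only [Matrix.transpose_apply, hM, Matrix.of_apply]
          rw [if_neg (fun hc => hj hc.2)]
          rfl
        rw [this]; exact U.zero_mem
    have hMmem : M ∈ matIn m U := hcols
    have hMrank : M.rank = D := by
      rw [Matrix.rank_eq_finrank_span_cols, Matrix.col]
      have hspan : Submodule.span F (Set.range Mᵀ) = U := by
        apply le_antisymm
        · rw [Submodule.span_le]
          rintro x ⟨j, rfl⟩
          exact hcols j
        · rw [hU, Submodule.span_le]
          rintro x ⟨i, rfl⟩
          apply Submodule.subset_span
          refine ⟨Fin.castLE (hD.trans hkm) i, ?_⟩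
          funext i'
          rw [hu]
          simp only [Matrix.transpose_apply, hM, Matrix.of_apply]
          rw [Pi.single_apply]
          by_cases h : (i' : ℕ) = (i : ℕ)
          · rw [if_pos ⟨by simpa using h, by simpa using i.2⟩, if_pos (Fin.ext (by simpa using h))]
          · rw [if_neg, if_neg]
            · intro hc; exact h (by simpa using congrArg Fin.val hc)
            · intro hc; exact h (by simpa using hc.1)
      rw [hspan, hUdim]
    -- upper bound on ranks
    have hub : ∀ N ∈ matIn m U, N.rank ≤ D := by
      intro N hN
      rw [Matrix.rank_eq_finrank_span_cols, Matrix.col]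
      have : Submodule.span F (Set.range Nᵀ) ≤ U := by
        rw [Submodule.span_le]
        rintro x ⟨j, rfl⟩
        exact hN j
      calc finrank F (Submodule.span F (Set.range Nᵀ)) ≤ finrank F U :=
            Submodule.finrank_mono this
        _ = D := hUdim
    refine le_antisymm (csSup_le ⟨0, 0, Submodule.zero_mem _, Matrix.rank_zero⟩ ?_)
      (le_csSup (rankset_bdd _) ⟨M, hMmem, hMrank⟩)
    rintro x ⟨N, hN, rfl⟩
    exact hub N hN
  · -- dimension
    rw [LinearEquiv.finrank_eq (matInEquiv (m := m) U), Module.finrank_pi_fintype]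
    simp [hUdim, Finset.sum_const, mul_comm]


lemma transposeLE_apply {k m : ℕ} (M : Matrix (Fin k) (Fin m) F) :
    (Matrix.transposeLinearEquiv (Fin k) (Fin m) F F) M = Mᵀ := rfl

lemma maxrk_map_transpose {k m : ℕ} (C : Submodule F (Matrix (Fin k) (Fin m) F)) :
    maxrk (C.map (Matrix.transposeLinearEquiv (Fin k) (Fin m) F F).toLinearMap)
      = maxrk C := by
  unfold maxrk
  congr 1
  ext r
  constructor
  · rintro ⟨M, ⟨N, hN, rfl⟩, h⟩
    refine ⟨N, hN, ?_⟩
    rw [← h, LinearEquiv.coe_coe, transposeLE_apply, Matrix.rank_transpose]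
  · rintro ⟨N, hN, rfl⟩
    exact ⟨Nᵀ, ⟨N, hN, rfl⟩, Matrix.rank_transpose N⟩

end proof10

/-- Anticode bound, and existence of codes attaining it. -/
theorem stmt_10 (F : Type) [Field F] [Fintype F] (k m : ℕ) (hk : 0 < k) (hm : 0 < m) :
    (∀ C : Submodule F (Matrix (Fin k) (Fin m) F),
      Module.finrank F ↥C ≤ max k m * maxrk C) ∧
    (∀ D : ℕ, D ≤ min k m →
      ∃ C : Submodule F (Matrix (Fin k) (Fin m) F),
        maxrk C = D ∧ Module.finrank F ↥C = max k m * D) := by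
  constructor
  · intro C
    rcases le_total k m with hkm | hmk
    · rw [max_eq_right hkm]
      exact anticode_bound_le F hkm hm C
    · rw [max_eq_left hmk]
      have h1 := anticode_bound_le F hmk hk
        (C.map (Matrix.transposeLinearEquiv (Fin k) (Fin m) F F).toLinearMap)
      rw [maxrk_map_transpose,
        LinearEquiv.finrank_map_eq (Matrix.transposeLinearEquiv (Fin k) (Fin m) F F) C] at h1
      exact h1
  · intro D hD
    rcases le_total k m with hkm | hmk
    · rw [max_eq_right hkm]
      exact anticode_exists hkm D (le_trans hD (min_le_left _ _))
    · rw [max_eq_left hmk]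
      obtain ⟨C', h1, h2⟩ := @anticode_exists F _ m k hmk D (le_trans hD (min_le_right _ _))
      refine ⟨C'.map (Matrix.transposeLinearEquiv (Fin m) (Fin k) F F).toLinearMap, ?_, ?_⟩
      · rw [maxrk_map_transpose, h1]
      · rw [LinearEquiv.finrank_map_eq (Matrix.transposeLinearEquiv (Fin m) (Fin k) F F) C', h2]
end

section
/- Let q be a prime power, let k, m be positive integers, and let C ⊆ Mat(k×m, F_q) be a non-zero F_q-linear subspace. Then minrk(C) ≤ maxrk(C^⊥) + 1. -/
open Matrix BigOperators

variable {F : Type} [Field F]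

section Aux

open Matrix BigOperators Module

variable {F : Type} [Field F]

lemma trace_mul_transpose_eq_sum' {k m : ℕ} (M N : Matrix (Fin k) (Fin m) F) :
    Matrix.trace (M * Nᵀ) = ∑ i, ∑ j, M i j * N i j := by
  simp [Matrix.trace, Matrix.mul_apply, Matrix.diag]

lemma trace_mul_transpose_comm' {k m : ℕ} (M N : Matrix (Fin k) (Fin m) F) :
    Matrix.trace (M * Nᵀ) = Matrix.trace (N * Mᵀ) := by
  rw [trace_mul_transpose_eq_sum', trace_mul_transpose_eq_sum']
  exact Finset.sum_congr rfl fun i _ => Finset.sum_congr rfl fun j _ => mul_comm _ _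

lemma mem_dualCode' {k m : ℕ} (C : Submodule F (Matrix (Fin k) (Fin m) F))
    (N : Matrix (Fin k) (Fin m) F) :
    N ∈ dualCode C ↔ ∀ M ∈ C, Matrix.trace (M * Nᵀ) = 0 := Iff.rfl

/-- The linear map sending `N` to the functional `M ↦ Tr(M Nᵗ)`. -/
noncomputable def tracePhi (k m : ℕ) :
    Matrix (Fin k) (Fin m) F →ₗ[F] Module.Dual F (Matrix (Fin k) (Fin m) F) :=
  (LinearMap.mk₂ F (fun M N : Matrix (Fin k) (Fin m) F => Matrix.trace (M * Nᵀ))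
    (fun M M' N => by simp [Matrix.add_mul])
    (fun c M N => by simp [Matrix.smul_mul])
    (fun M N N' => by simp [Matrix.mul_add])
    (fun c M N => by simp [Matrix.mul_smul])).flip

@[simp] lemma tracePhi_apply {k m : ℕ} (N M : Matrix (Fin k) (Fin m) F) :
    tracePhi k m N M = Matrix.trace (M * Nᵀ) := rfl

lemma tracePhi_injective (k m : ℕ) :
    Function.Injective (tracePhi (F := F) k m) := by
  rw [injective_iff_map_eq_zero]
  intro N hN
  ext i j
  have h := congrArg (fun f => f (Matrix.single i j (1 : F))) hN
  simp only [tracePhi_apply, LinearMap.zero_apply] at h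
  rw [trace_mul_transpose_eq_sum'] at h
  simpa [Matrix.single, Matrix.of_apply, ite_and, Finset.sum_ite_eq] using h

lemma dualCode_eq_comap {k m : ℕ} (C : Submodule F (Matrix (Fin k) (Fin m) F)) :
    dualCode C = (Submodule.dualAnnihilator C).comap (tracePhi k m) := by
  ext N
  simp [mem_dualCode', Submodule.mem_dualAnnihilator]

lemma finrank_add_finrank_dualCode {k m : ℕ} (C : Submodule F (Matrix (Fin k) (Fin m) F)) :
    finrank F C + finrank F (dualCode C) = k * m := by
  classical
  have hdim : finrank F (Matrix (Fin k) (Fin m) F) = k * m := by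
    rw [Module.finrank_matrix]
    simp
  have hsurj : Function.Surjective (tracePhi (F := F) k m) := by
    refine (LinearMap.injective_iff_surjective_of_finrank_eq_finrank ?_).mp
      (tracePhi_injective k m)
    rw [Subspace.dual_finrank_eq]
  let e : Matrix (Fin k) (Fin m) F ≃ₗ[F] Module.Dual F (Matrix (Fin k) (Fin m) F) :=
    LinearEquiv.ofBijective (tracePhi k m) ⟨tracePhi_injective k m, hsurj⟩
  have hcomap : dualCode C = (Submodule.dualAnnihilator C).comap (e : _ →ₗ[F] _) :=
    dualCode_eq_comap C
  have h1 : finrank F (dualCode C) = finrank F (Submodule.dualAnnihilator C) := by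
    rw [hcomap, Submodule.comap_equiv_eq_map_symm]
    exact LinearEquiv.finrank_map_eq _ _
  have h2 : finrank F (Submodule.dualAnnihilator C)
      = finrank F (Matrix (Fin k) (Fin m) F ⧸ C) :=
    (LinearEquiv.finrank_eq (Subspace.quotEquivAnnihilator C)).symm
  rw [h1, h2, add_comm, Submodule.finrank_quotient_add_finrank, hdim]

lemma dualCode_dualCode {k m : ℕ} (C : Submodule F (Matrix (Fin k) (Fin m) F)) :
    dualCode (dualCode C) = C := by
  have hle : C ≤ dualCode (dualCode C) := by
    intro M hM N hN
    rw [trace_mul_transpose_comm']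
    exact hN M hM
  have h1 := finrank_add_finrank_dualCode C
  have h2 := finrank_add_finrank_dualCode (dualCode C)
  exact (Submodule.eq_of_le_of_finrank_le hle (by omega)).symm

end Aux

section Aux2

open Matrix BigOperators Module

variable {F : Type} [Field F] {k m s : ℕ}

/-- Restriction to the first `s` columns. -/
def colProj (hsm : s ≤ m) : Matrix (Fin k) (Fin m) F →ₗ[F] Matrix (Fin k) (Fin s) F where
  toFun M := Matrix.of fun i j => M i (Fin.castLE hsm j)
  map_add' := by intro a b; ext i j; simp
  map_smul' := by intro c a; ext i j; simp

/-- Extension by zero columns. -/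
noncomputable def colExt (hsm : s ≤ m) : Matrix (Fin k) (Fin s) F →ₗ[F] Matrix (Fin k) (Fin m) F where
  toFun P := Matrix.of fun i j => ∑ j', if j = Fin.castLE hsm j' then P i j' else 0
  map_add' := by
    intro a b
    ext i j
    simp only [Matrix.of_apply, Matrix.add_apply]
    rw [← Finset.sum_add_distrib]
    exact Finset.sum_congr rfl fun j' _ => by split_ifs <;> simp
  map_smul' := by
    intro c a
    ext i j
    simp only [Matrix.of_apply, RingHom.id_apply, Matrix.smul_apply, smul_eq_mul]
    rw [Finset.mul_sum]
    exact Finset.sum_congr rfl fun j' _ => by split_ifs <;> simp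

lemma colProj_colExt (hsm : s ≤ m) (P : Matrix (Fin k) (Fin s) F) :
    colProj hsm (colExt (F := F) hsm P) = P := by
  ext i j
  simp [colProj, colExt, Fin.castLE_inj, Finset.sum_ite_eq]

lemma rank_colExt_le (hsm : s ≤ m) (P : Matrix (Fin k) (Fin s) F) :
    (colExt (F := F) hsm P).rank ≤ s := by
  have : colExt (F := F) hsm P
      = P * (Matrix.of fun j' j => if j = Fin.castLE hsm j' then (1 : F) else 0) := by
    ext i j
    simp [colExt, Matrix.mul_apply, mul_ite]
  rw [this]
  exact (Matrix.rank_mul_le_left _ _).trans ((Matrix.rank_le_card_width P).trans (by simp))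

lemma trace_mul_colExt (hsm : s ≤ m) (N : Matrix (Fin k) (Fin m) F)
    (P : Matrix (Fin k) (Fin s) F) :
    Matrix.trace (N * (colExt (F := F) hsm P)ᵀ)
      = Matrix.trace (colProj hsm N * Pᵀ) := by
  rw [trace_mul_transpose_eq_sum', trace_mul_transpose_eq_sum']
  refine Finset.sum_congr rfl fun i _ => ?_
  calc ∑ j, N i j * colExt (F := F) hsm P i j
      = ∑ j, ∑ j', if j = Fin.castLE hsm j' then N i j * P i j' else 0 := by
        refine Finset.sum_congr rfl fun j _ => ?_
        simp [colExt, Finset.mul_sum, mul_ite]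
    _ = ∑ j', ∑ j, if j = Fin.castLE hsm j' then N i j * P i j' else 0 := Finset.sum_comm
    _ = ∑ j', N i (Fin.castLE hsm j') * P i j' := by
        refine Finset.sum_congr rfl fun j' _ => ?_
        simp
    _ = ∑ j', colProj hsm N i j' * P i j' := rfl

end Aux2

/-- The minimum rank of a non-zero code is at most the maximum rank of the dual plus one. -/
theorem stmt_11 (F : Type) [Field F] [Fintype F] (k m : ℕ) (hk : 0 < k) (hm : 0 < m)
    (C : Submodule F (Matrix (Fin k) (Fin m) F)) (hC0 : C ≠ ⊥) :
    minrk C ≤ maxrk (dualCode C) + 1 := by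
  classical
  set D := dualCode C with hDdef
  set t := maxrk D with htdef
  by_contra hcon
  push_neg at hcon
  -- every nonzero element of C has rank ≥ t + 2
  have hrank_ge : ∀ M ∈ C, M ≠ 0 → t + 2 ≤ M.rank := by
    intro M hM hne
    have h1 : minrk C ≤ M.rank := Nat.sInf_le ⟨M, hM, hne, rfl⟩
    omega
  obtain ⟨M0, hM0C, hM0ne⟩ := (Submodule.ne_bot_iff C).mp hC0
  have hM0k : M0.rank ≤ k := (Matrix.rank_le_card_height M0).trans (by simp)
  have hM0m : M0.rank ≤ m := (Matrix.rank_le_card_width M0).trans (by simp)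
  have hM0r := hrank_ge M0 hM0C hM0ne
  have hsk : t + 1 ≤ k := by omega
  have hsm : t + 1 ≤ m := by omega
  set s := t + 1 with hsdef
  set V := Submodule.map (colProj (F := F) (k := k) hsm) D with hVdef
  -- the dual of V is trivial
  have hVdual : dualCode V = ⊥ := by
    rw [Submodule.eq_bot_iff]
    intro P hP
    have hextD : colExt (F := F) hsm P ∈ dualCode D := by
      intro N hN
      rw [trace_mul_colExt]
      exact hP (colProj hsm N) (Submodule.mem_map_of_mem hN)
    rw [hDdef, dualCode_dualCode] at hextD
    by_contra hPne
    have hextne : colExt (F := F) hsm P ≠ 0 := by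
      intro h0
      apply hPne
      rw [← colProj_colExt hsm P, h0, map_zero]
    have h2 := hrank_ge _ hextD hextne
    have h3 := rank_colExt_le hsm P
    omega
  -- hence V is everything
  have hfr := finrank_add_finrank_dualCode V
  rw [hVdual] at hfr
  simp only [finrank_bot, add_zero] at hfr
  have hVtop : V = ⊤ := by
    apply Submodule.eq_top_of_finrank_eq
    rw [hfr, Module.finrank_matrix]
    simp
  -- extract a matrix of D with an identity submatrix
  set E : Matrix (Fin k) (Fin s) F :=
    Matrix.of fun i j => if (i : ℕ) = (j : ℕ) then 1 else 0 with hEdef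
  have hE : E ∈ V := hVtop ▸ Submodule.mem_top
  obtain ⟨N, hND, hNE⟩ := hE
  have hNcol : ∀ (i : Fin k) (j : Fin s),
      N i (Fin.castLE hsm j) = if (i : ℕ) = (j : ℕ) then 1 else 0 := by
    intro i j
    have h := congrFun (congrFun (congrArg (fun M => (M : Matrix (Fin k) (Fin s) F)) hNE) i) j
    simpa [colProj, hEdef] using h
  have hcolvec : ∀ j : Fin s,
      N.mulVec (Pi.single (Fin.castLE hsm j) 1) = Pi.single (Fin.castLE hsk j) (1 : F) := by
    intro j
    ext i
    rw [Matrix.mulVec_single_one]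
    show N i (Fin.castLE hsm j) = _
    rw [hNcol i j, Pi.single_apply]
    simp [Fin.ext_iff]
  have hli : LinearIndependent F
      fun j : Fin s => (Pi.single (Fin.castLE hsk j) (1 : F) : Fin k → F) := by
    have h := (Pi.basisFun F (Fin k)).linearIndependent.comp
      (Fin.castLE hsk) (Fin.castLE_injective hsk)
    simpa [Function.comp_def, Pi.basisFun_apply] using h
  have hw : ∀ j : Fin s,
      (Pi.single (Fin.castLE hsk j) (1 : F) : Fin k → F) ∈ LinearMap.range N.mulVecLin :=
    fun j => ⟨Pi.single (Fin.castLE hsm j) 1, by rw [Matrix.mulVecLin_apply, hcolvec]⟩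
  have hsle : s ≤ N.rank := by
    have hli2 : LinearIndependent F fun j : Fin s =>
        (⟨_, hw j⟩ : LinearMap.range N.mulVecLin) := by
      apply LinearIndependent.of_comp (LinearMap.range N.mulVecLin).subtype
      exact hli
    have h := hli2.fintype_card_le_finrank
    simpa [Matrix.rank] using h
  have hle : N.rank ≤ t := by
    have hbdd : BddAbove {r | ∃ M ∈ D, M.rank = r} :=
      ⟨k, by rintro r ⟨M, _, rfl⟩; exact (Matrix.rank_le_card_height M).trans (by simp)⟩
    exact le_csSup hbdd ⟨N, hND, rfl⟩
  omega
end
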